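/- Let N ≥ 3 be an integer, γ = [[a,b],[c,d]] ∈ SL(2,ℤ) and τ ∈ ℍ. Then M_N(γ·τ) = (cτ+d)^{3·#Q_N} · M_N(τ). -/

import Mathlib

open Complex

noncomputable section

/-- The lattice point `m + n·τ` for `ω = (m, n)`. -/
def latticePt (τ : ℂ) (ω : ℤ × ℤ) : ℂ := (ω.1 : ℂ) + (ω.2 : ℂ) * τ

/-- `z ∈ Λ_τ = ℤ + ℤτ`. -/
def InLattice (τ z : ℂ) : Prop := ∃ m n : ℤ, z = (m : ℂ) + (n : ℂ) * τ

/-- The Weierstrass elliptic function `℘(z|τ)`. -/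
def wp (τ z : ℂ) : ℂ :=
  1 / z ^ 2 + ∑' ω : ℤ × ℤ,
    if ω = 0 then 0 else 1 / (z - latticePt τ ω) ^ 2 - 1 / latticePt τ ω ^ 2

/-- `℘'(z|τ)`, the derivative of `℘` in `z`. -/
def wpDeriv (τ z : ℂ) : ℂ := deriv (wp τ) z

/-- The Weierstrass zeta function `ζ(z|τ)`. -/
def wzeta (τ z : ℂ) : ℂ :=
  1 / z + ∑' ω : ℤ × ℤ,
    if ω = 0 then 0 else 1 / (z - latticePt τ ω) + 1 / latticePt τ ω + z / latticePt τ ω ^ 2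

/-- The quasi-period `η₁(τ) = 2ζ(1/2|τ)`. -/
def eta1 (τ : ℂ) : ℂ := 2 * wzeta τ (1 / 2)

/-- The quasi-period `η₂(τ) = 2ζ(τ/2|τ)`. -/
def eta2 (τ : ℂ) : ℂ := 2 * wzeta τ (τ / 2)

/-- The invariant `g₂(τ)`. -/
def gTwo (τ : ℂ) : ℂ := 60 * ∑' ω : ℤ × ℤ, if ω = 0 then 0 else 1 / latticePt τ ω ^ 4

/-- The Hecke-type form `Z_{r,s}(τ)`. -/
def Zrs (r s τ : ℂ) : ℂ := wzeta τ (r + s * τ) - r * eta1 τ - s * eta2 τ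

/-- The premodular form `Z^{(2)}_{r,s}(τ)`. -/
def Z2 (r s τ : ℂ) : ℂ :=
  Zrs r s τ ^ 3 - 3 * wp τ (r + s * τ) * Zrs r s τ - wpDeriv τ (r + s * τ)

/-- `(r, s) ∈ (½ℤ)²`. -/
def HalfInt (r s : ℂ) : Prop := (∃ m : ℤ, r = (m : ℂ) / 2) ∧ (∃ n : ℤ, s = (n : ℂ) / 2)

end


noncomputable section
namespace MNaux

open Filter EisensteinSeries

variable {τ : ℂ}

lemma latticePt_add (τ : ℂ) (x y : ℤ × ℤ) :
    latticePt τ (x + y) = latticePt τ x + latticePt τ y := by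
  simp only [latticePt, Prod.fst_add, Prod.snd_add]
  push_cast; ring

lemma latticePt_neg (τ : ℂ) (x : ℤ × ℤ) : latticePt τ (-x) = -latticePt τ x := by
  simp only [latticePt, Prod.fst_neg, Prod.snd_neg]
  push_cast; ring

lemma latticePt_zero (τ : ℂ) : latticePt τ 0 = 0 := by simp [latticePt]

lemma latticePt_ne_zero (hτ : 0 < τ.im) {ω : ℤ × ℤ} (hω : ω ≠ 0) :
    latticePt τ ω ≠ 0 := by
  intro h
  have him : (latticePt τ ω).im = 0 := by rw [h]; rfl
  have hre : (latticePt τ ω).re = 0 := by rw [h]; rfl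
  simp only [latticePt, Complex.add_im, Complex.intCast_im, Complex.mul_im,
    Complex.intCast_re, Complex.intCast_im, Complex.add_re, Complex.mul_re] at him hre
  have h2 : (ω.2 : ℝ) = 0 := by
    rcases mul_eq_zero.1 (by linarith : (ω.2 : ℝ) * τ.im = 0) with h | h
    · exact h
    · exact absurd h (ne_of_gt hτ)
  have h1 : (ω.1 : ℝ) = 0 := by rw [h2] at hre; linarith
  exact hω (Prod.ext (by exact_mod_cast h1) (by exact_mod_cast h2))

/-- Norm on `ℤ × ℤ` agrees with the `Fin 2 → ℤ` norm of `![ω.2, ω.1]`. -/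
lemma norm_pair (ω : ℤ × ℤ) : ‖(![ω.2, ω.1] : Fin 2 → ℤ)‖ = ‖ω‖ := by
  rw [EisensteinSeries.norm_eq_max_natAbs]
  rw [Prod.norm_def]
  simp only [Matrix.cons_val_zero, Matrix.cons_val_one, Matrix.head_cons]
  rw [Int.norm_eq_abs, Int.norm_eq_abs]
  rw [max_comm]
  push_cast [Int.abs_eq_natAbs]
  rw [max_def, max_def]
  norm_num [Nat.cast_natAbs]

lemma r_mul_norm_le (hτ : 0 < τ.im) {ω : ℤ × ℤ} (hω : ω ≠ 0) :
    EisensteinSeries.r ⟨τ, hτ⟩ * ‖ω‖ ≤ ‖latticePt τ ω‖ := by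
  have hx : (![ω.2, ω.1] : Fin 2 → ℤ) ≠ 0 := by
    intro h
    apply hω
    have h0 := congrFun h 0
    have h1 := congrFun h 1
    simp at h0 h1
    exact Prod.ext h1 h0
  have := EisensteinSeries.r_mul_max_le (z := ⟨τ, hτ⟩) hx
  rw [norm_pair] at this
  simpa [latticePt, add_comm] using this

lemma summable_norm_cube : Summable (fun ω : ℤ × ℤ => ‖ω‖ ^ (-(3:ℝ))) := by
  have h := EisensteinSeries.summable_one_div_norm_rpow (k := 3) (by norm_num)
  rw [← Equiv.summable_iff (finTwoArrowEquiv ℤ)]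
  apply Summable.congr h
  intro v
  have hv : v = ![v 0, v 1] := by funext i; fin_cases i <;> rfl
  congr 1
  have he : finTwoArrowEquiv ℤ v = (v 0, v 1) := by simp
  rw [he]
  symm
  calc ‖((v 0, v 1) : ℤ × ℤ)‖ = ‖((v 1, v 0) : ℤ × ℤ)‖ := by
        rw [Prod.norm_def, Prod.norm_def]; exact max_comm _ _
    _ = ‖(![v 0, v 1] : Fin 2 → ℤ)‖ := (norm_pair ((v 1, v 0) : ℤ × ℤ)).symm
    _ = ‖v‖ := by rw [← hv]


section
open Filter
variable {τ : ℂ}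

/-- Any function eventually bounded by `C / ‖latticePt τ ω‖³` is summable. -/
lemma summable_master (hτ : 0 < τ.im) {f : ℤ × ℤ → ℂ} {C : ℝ} (hC : 0 ≤ C)
    (h : ∀ᶠ ω in cofinite, ‖f ω‖ ≤ C / ‖latticePt τ ω‖ ^ 3) : Summable f := by
  set δ := EisensteinSeries.r ⟨τ, hτ⟩ with hδ
  have hδ0 : 0 < δ := EisensteinSeries.r_pos ⟨τ, hτ⟩
  apply Summable.of_norm_bounded_eventually (g := fun ω : ℤ × ℤ => (C / δ ^ 3) * ‖ω‖ ^ (-(3:ℝ)))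
    (summable_norm_cube.mul_left _)
  filter_upwards [h, eventually_cofinite_ne (0 : ℤ × ℤ)] with ω h1 h2
  have hω : 0 < ‖ω‖ := norm_pos_iff.2 h2
  have hr := r_mul_norm_le hτ h2
  have hp : 0 < δ * ‖ω‖ := by positivity
  refine h1.trans ?_
  have key : C / ‖latticePt τ ω‖ ^ 3 ≤ C / (δ * ‖ω‖) ^ 3 := by
    gcongr
  refine key.trans (le_of_eq ?_)
  have h3 : ‖ω‖ ^ (-(3:ℝ)) = (‖ω‖ ^ (3:ℕ))⁻¹ := by
    rw [Real.rpow_neg (norm_nonneg _)]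
    norm_cast
  rw [h3, mul_pow, div_mul_eq_div_mul_one_div, one_div]

lemma eventually_latticePt_large (hτ : 0 < τ.im) (R : ℝ) :
    ∀ᶠ ω : ℤ × ℤ in cofinite, R ≤ ‖latticePt τ ω‖ := by
  set δ := EisensteinSeries.r ⟨τ, hτ⟩ with hδ
  have hδ0 : 0 < δ := EisensteinSeries.r_pos ⟨τ, hτ⟩
  rw [Filter.eventually_cofinite]
  set K : ℝ := max 0 (R / δ) with hK
  have hsub : {ω : ℤ × ℤ | ¬ R ≤ ‖latticePt τ ω‖} ⊆
      Set.Icc (-(⌈K⌉ + 1), -(⌈K⌉ + 1)) (⌈K⌉ + 1, ⌈K⌉ + 1) := by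
    intro ω hω
    simp only [Set.mem_setOf_eq, not_le] at hω
    have hnorm : ‖ω‖ ≤ K := by
      rcases eq_or_ne ω 0 with rfl | h0
      · simp [hK]
      · have h1 := r_mul_norm_le hτ h0
        have h2 : δ * ‖ω‖ < R := lt_of_le_of_lt h1 hω
        have h3 : ‖ω‖ < R / δ := by
          rw [lt_div_iff₀ hδ0, mul_comm]; exact h2
        exact le_trans (le_of_lt h3) (le_max_right _ _)
    have hKc : K ≤ (⌈K⌉ : ℝ) + 1 := by
      linarith [Int.le_ceil K]
    have c1 : |(ω.1 : ℝ)| ≤ K := by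
      rw [← Int.norm_eq_abs]
      exact le_trans (le_trans (le_max_left _ _) (le_of_eq (Prod.norm_def ω).symm)) hnorm
    have c2 : |(ω.2 : ℝ)| ≤ K := by
      rw [← Int.norm_eq_abs]
      exact le_trans (le_trans (le_max_right _ _) (le_of_eq (Prod.norm_def ω).symm)) hnorm
    rw [abs_le] at c1 c2
    have r1 : ((-(⌈K⌉ + 1) : ℤ) : ℝ) ≤ ((ω.1 : ℤ) : ℝ) := by push_cast; linarith [c1.1]
    have r2 : ((-(⌈K⌉ + 1) : ℤ) : ℝ) ≤ ((ω.2 : ℤ) : ℝ) := by push_cast; linarith [c2.1]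
    have r3 : ((ω.1 : ℤ) : ℝ) ≤ (((⌈K⌉ + 1) : ℤ) : ℝ) := by push_cast; linarith [c1.2]
    have r4 : ((ω.2 : ℤ) : ℝ) ≤ (((⌈K⌉ + 1) : ℤ) : ℝ) := by push_cast; linarith [c2.2]
    exact ⟨⟨Int.cast_le.mp r1, Int.cast_le.mp r2⟩, ⟨Int.cast_le.mp r3, Int.cast_le.mp r4⟩⟩
  exact Set.Finite.subset (Set.finite_Icc _ _) hsub

end
section
open Filter
variable {τ : ℂ}

/-- ζ-series summand, including the `ω = 0` term. -/
def zterm (τ z : ℂ) (ω : ℤ × ℤ) : ℂ :=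
  if ω = 0 then 1 / z
  else 1 / (z - latticePt τ ω) + 1 / latticePt τ ω + z / latticePt τ ω ^ 2

/-- ℘-series summand, including the `ω = 0` term. -/
def pterm (τ z : ℂ) (ω : ℤ × ℤ) : ℂ :=
  if ω = 0 then 1 / z ^ 2
  else 1 / (z - latticePt τ ω) ^ 2 - 1 / latticePt τ ω ^ 2

/-- constant part of the ζ-series shift. -/
def ccterm (τ : ℂ) (e ω : ℤ × ℤ) : ℂ :=
  if ω = 0 then 2 / latticePt τ e
  else if ω = -e then 1 / latticePt τ e
  else 1 / latticePt τ (ω + e) - 1 / latticePt τ ω + latticePt τ e / latticePt τ (ω + e) ^ 2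

/-- antisymmetric part of the series shifts. -/
def ppterm (τ : ℂ) (e ω : ℤ × ℤ) : ℂ :=
  if ω = 0 then 1 / latticePt τ e ^ 2
  else if ω = -e then -(1 / latticePt τ e ^ 2)
  else 1 / latticePt τ (ω + e) ^ 2 - 1 / latticePt τ ω ^ 2

lemma half_le {u v : ℂ} (h : 2 * ‖v‖ ≤ ‖u‖) : ‖u‖ / 2 ≤ ‖u + v‖ := by
  have h1 : ‖u‖ ≤ ‖u + v‖ + ‖v‖ := by
    calc ‖u‖ = ‖(u + v) + (-v)‖ := by ring_nf
      _ ≤ ‖u + v‖ + ‖-v‖ := norm_add_le _ _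
      _ = ‖u + v‖ + ‖v‖ := by rw [norm_neg]
  linarith

lemma summable_zterm (hτ : 0 < τ.im) (z : ℂ) : Summable (zterm τ z) := by
  apply summable_master hτ (C := 2 * ‖z‖ ^ 2) (by positivity)
  filter_upwards [eventually_latticePt_large hτ (max 1 (2 * ‖z‖ + 1)),
    eventually_cofinite_ne (0 : ℤ × ℤ)] with ω hlarge hne
  set u := latticePt τ ω with hu
  have hu1 : 1 ≤ ‖u‖ := le_trans (le_max_left _ _) hlarge
  have hu2 : 2 * ‖z‖ + 1 ≤ ‖u‖ := le_trans (le_max_right _ _) hlarge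
  have hu0 : u ≠ 0 := by intro h; rw [h, norm_zero] at hu1; linarith
  have hzu : z - u ≠ 0 := by
    intro h
    have : z = u := by linear_combination h
    rw [this] at hu2; linarith [norm_nonneg u]
  have hhalf : ‖u‖ / 2 ≤ ‖z - u‖ := by
    have h2 : ‖z - u‖ = ‖u + -z‖ := by rw [← norm_neg]; ring_nf
    rw [h2]
    apply half_le; rw [norm_neg]; linarith
  have hid : zterm τ z ω = z ^ 2 / (u ^ 2 * (z - u)) := by
    rw [zterm, if_neg hne, ← hu]
    field_simp
    ring
  rw [hid]
  rw [norm_div, norm_mul, norm_pow, norm_pow]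
  calc ‖z‖ ^ 2 / (‖u‖ ^ 2 * ‖z - u‖) ≤ ‖z‖ ^ 2 / (‖u‖ ^ 2 * (‖u‖ / 2)) := by
        gcongr
      _ = 2 * ‖z‖ ^ 2 / ‖u‖ ^ 3 := by
        have h0u : 0 < ‖u‖ := norm_pos_iff.2 hu0
        rw [div_eq_div_iff (ne_of_gt (mul_pos (pow_pos h0u 2) (by linarith))) (ne_of_gt (pow_pos h0u 3))]
        ring

lemma summable_pterm (hτ : 0 < τ.im) (z : ℂ) : Summable (pterm τ z) := by
  apply summable_master hτ (C := 12 * ‖z‖) (by positivity)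
  filter_upwards [eventually_latticePt_large hτ (max 1 (2 * ‖z‖ + 1)),
    eventually_cofinite_ne (0 : ℤ × ℤ)] with ω hlarge hne
  set u := latticePt τ ω with hu
  have hu1 : 1 ≤ ‖u‖ := le_trans (le_max_left _ _) hlarge
  have hu2 : 2 * ‖z‖ + 1 ≤ ‖u‖ := le_trans (le_max_right _ _) hlarge
  have hu0 : u ≠ 0 := by intro h; rw [h, norm_zero] at hu1; linarith
  have hzu : z - u ≠ 0 := by
    intro h
    have : z = u := by linear_combination h
    rw [this] at hu2; linarith [norm_nonneg u]
  have hhalf : ‖u‖ / 2 ≤ ‖z - u‖ := by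
    have h2 : ‖z - u‖ = ‖u + -z‖ := by rw [← norm_neg]; ring_nf
    rw [h2]
    apply half_le; rw [norm_neg]; linarith
  have hid : pterm τ z ω = z * (2 * u - z) / (u ^ 2 * (z - u) ^ 2) := by
    rw [pterm, if_neg hne, ← hu]
    field_simp
    ring
  rw [hid, norm_div, norm_mul, norm_mul, norm_pow, norm_pow]
  have hnum : ‖2 * u - z‖ ≤ 3 * ‖u‖ := by
    calc ‖2 * u - z‖ ≤ ‖2 * u‖ + ‖z‖ := norm_sub_le _ _
      _ = 2 * ‖u‖ + ‖z‖ := by rw [norm_mul]; norm_num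
      _ ≤ 3 * ‖u‖ := by linarith
  calc ‖z‖ * ‖2 * u - z‖ / (‖u‖ ^ 2 * ‖z - u‖ ^ 2)
      ≤ ‖z‖ * (3 * ‖u‖) / (‖u‖ ^ 2 * (‖u‖ / 2) ^ 2) := by
        gcongr
      _ = 12 * ‖z‖ / ‖u‖ ^ 3 := by
        have h0u : 0 < ‖u‖ := norm_pos_iff.2 hu0
        rw [div_eq_div_iff (ne_of_gt (mul_pos (pow_pos h0u 2) (pow_pos (by linarith) 2))) (ne_of_gt (pow_pos h0u 3))]
        ring

lemma summable_ccterm (hτ : 0 < τ.im) (e : ℤ × ℤ) : Summable (ccterm τ e) := by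
  set E := latticePt τ e with hE
  apply summable_master hτ (C := 4 * ‖E‖ ^ 2) (by positivity)
  filter_upwards [eventually_latticePt_large hτ (max 1 (2 * ‖E‖ + 1)),
    eventually_cofinite_ne (0 : ℤ × ℤ), eventually_cofinite_ne (-e)] with ω hlarge hne hne'
  set u := latticePt τ ω with hu
  have hu1 : 1 ≤ ‖u‖ := le_trans (le_max_left _ _) hlarge
  have hu2 : 2 * ‖E‖ + 1 ≤ ‖u‖ := le_trans (le_max_right _ _) hlarge
  have hu0 : u ≠ 0 := by intro h; rw [h, norm_zero] at hu1; linarith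
  have hadd : latticePt τ (ω + e) = u + E := latticePt_add τ ω e
  have hhalf : ‖u‖ / 2 ≤ ‖u + E‖ := half_le (by linarith)
  have hue : u + E ≠ 0 := by
    intro h; rw [h, norm_zero] at hhalf; linarith
  have hid : ccterm τ e ω = -(E ^ 2) / (u * (u + E) ^ 2) := by
    rw [ccterm, if_neg hne, if_neg hne', hadd, ← hu, ← hE]
    field_simp
    ring
  rw [hid, norm_div, norm_neg, norm_pow, norm_mul, norm_pow]
  calc ‖E‖ ^ 2 / (‖u‖ * ‖u + E‖ ^ 2) ≤ ‖E‖ ^ 2 / (‖u‖ * (‖u‖ / 2) ^ 2) := by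
        gcongr
      _ = 4 * ‖E‖ ^ 2 / ‖u‖ ^ 3 := by
        have h0u : 0 < ‖u‖ := norm_pos_iff.2 hu0
        rw [div_eq_div_iff (ne_of_gt (mul_pos h0u (pow_pos (by linarith) 2))) (ne_of_gt (pow_pos h0u 3))]
        ring

lemma summable_ppterm (hτ : 0 < τ.im) (e : ℤ × ℤ) : Summable (ppterm τ e) := by
  set E := latticePt τ e with hE
  apply summable_master hτ (C := 12 * ‖E‖) (by positivity)
  filter_upwards [eventually_latticePt_large hτ (max 1 (2 * ‖E‖ + 1)),
    eventually_cofinite_ne (0 : ℤ × ℤ), eventually_cofinite_ne (-e)] with ω hlarge hne hne'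
  set u := latticePt τ ω with hu
  have hu1 : 1 ≤ ‖u‖ := le_trans (le_max_left _ _) hlarge
  have hu2 : 2 * ‖E‖ + 1 ≤ ‖u‖ := le_trans (le_max_right _ _) hlarge
  have hu0 : u ≠ 0 := by intro h; rw [h, norm_zero] at hu1; linarith
  have hadd : latticePt τ (ω + e) = u + E := latticePt_add τ ω e
  have hhalf : ‖u‖ / 2 ≤ ‖u + E‖ := half_le (by linarith)
  have hue : u + E ≠ 0 := by
    intro h; rw [h, norm_zero] at hhalf; linarith
  have hid : ppterm τ e ω = -(E * (2 * u + E)) / (u ^ 2 * (u + E) ^ 2) := by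
    rw [ppterm, if_neg hne, if_neg hne', hadd, ← hu]
    field_simp
    ring
  rw [hid, norm_div, norm_neg, norm_mul, norm_mul, norm_pow, norm_pow]
  have hnum : ‖2 * u + E‖ ≤ 3 * ‖u‖ := by
    calc ‖2 * u + E‖ ≤ ‖2 * u‖ + ‖E‖ := norm_add_le _ _
      _ = 2 * ‖u‖ + ‖E‖ := by rw [norm_mul]; norm_num
      _ ≤ 3 * ‖u‖ := by linarith
  calc ‖E‖ * ‖2 * u + E‖ / (‖u‖ ^ 2 * ‖u + E‖ ^ 2)
      ≤ ‖E‖ * (3 * ‖u‖) / (‖u‖ ^ 2 * (‖u‖ / 2) ^ 2) := by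
        gcongr
      _ = 12 * ‖E‖ / ‖u‖ ^ 3 := by
        have h0u : 0 < ‖u‖ := norm_pos_iff.2 hu0
        rw [div_eq_div_iff (ne_of_gt (mul_pos (pow_pos h0u 2) (pow_pos (by linarith) 2))) (ne_of_gt (pow_pos h0u 3))]
        ring

end
section
open Filter
variable {τ : ℂ}

lemma wzeta_eq (hτ : 0 < τ.im) (z : ℂ) : wzeta τ z = ∑' ω, zterm τ z ω := by
  rw [wzeta, Summable.tsum_eq_add_tsum_ite (summable_zterm hτ z) 0]
  have h0 : zterm τ z 0 = 1 / z := by simp [zterm]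
  rw [h0]
  congr 1
  apply tsum_congr
  intro ω
  rcases eq_or_ne ω 0 with rfl | h
  · simp
  · simp [zterm, h]

lemma wp_eq (hτ : 0 < τ.im) (z : ℂ) : wp τ z = ∑' ω, pterm τ z ω := by
  rw [wp, Summable.tsum_eq_add_tsum_ite (summable_pterm hτ z) 0]
  have h0 : pterm τ z 0 = 1 / z ^ 2 := by simp [pterm]
  rw [h0]
  congr 1
  apply tsum_congr
  intro ω
  rcases eq_or_ne ω 0 with rfl | h
  · simp
  · simp [pterm, h]

lemma zterm_neg (τ z : ℂ) (ω : ℤ × ℤ) : zterm τ (-z) ω = -(zterm τ z (-ω)) := by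
  rcases eq_or_ne ω 0 with rfl | h
  · rw [zterm, if_pos rfl, neg_zero, zterm, if_pos rfl]
    rw [div_neg]
  · rw [zterm, if_neg h, zterm, if_neg (neg_ne_zero.2 h), latticePt_neg]
    have h1 : -z - latticePt τ ω = -(z + latticePt τ ω) := by ring
    rw [h1, sub_neg_eq_add, neg_sq, div_neg, div_neg]
    ring

lemma wzeta_neg (hτ : 0 < τ.im) (z : ℂ) : wzeta τ (-z) = -wzeta τ z := by
  calc wzeta τ (-z) = ∑' ω, zterm τ (-z) ω := wzeta_eq hτ _
    _ = ∑' ω, -(zterm τ z ((Equiv.neg (ℤ × ℤ)) ω)) := tsum_congr fun ω => zterm_neg τ z ω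
    _ = -∑' ω, zterm τ z ((Equiv.neg (ℤ × ℤ)) ω) := tsum_neg
    _ = -∑' ω, zterm τ z ω := by rw [(Equiv.neg (ℤ × ℤ)).tsum_eq (zterm τ z)]
    _ = -wzeta τ z := by rw [wzeta_eq hτ]

lemma EdivEsq (E : ℂ) : E / E ^ 2 = 1 / E := by
  rcases eq_or_ne E 0 with rfl | h
  · simp
  · field_simp

lemma zterm_shift {e : ℤ × ℤ} (he : e ≠ 0) (z : ℂ) (ω : ℤ × ℤ) :
    zterm τ (z + latticePt τ e) (ω + e)
      = zterm τ z ω + (ccterm τ e ω + z * ppterm τ e ω) := by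
  set E := latticePt τ e with hE
  by_cases h0 : ω = 0
  · subst h0
    rw [zero_add, zterm, if_neg he, zterm, if_pos rfl, ccterm, if_pos rfl,
      ppterm, if_pos rfl, ← hE]
    have h1 : z + E - E = z := by ring
    rw [h1]
    have h2 : (z + E) / E ^ 2 = z / E ^ 2 + E / E ^ 2 := by ring
    rw [h2, EdivEsq]
    ring
  · by_cases h1 : ω = -e
    · subst h1
      rw [neg_add_cancel, zterm, if_pos rfl, zterm, if_neg (neg_ne_zero.2 he),
        ccterm, if_neg (neg_ne_zero.2 he), if_pos rfl,
        ppterm, if_neg (neg_ne_zero.2 he), if_pos rfl, latticePt_neg, ← hE]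
      rw [sub_neg_eq_add, neg_sq, div_neg]
      ring
    · have h2 : ω + e ≠ 0 := fun hc => h1 (eq_neg_of_add_eq_zero_left hc)
      rw [zterm, if_neg h2, zterm, if_neg h0, ccterm, if_neg h0, if_neg h1,
        ppterm, if_neg h0, if_neg h1, latticePt_add, ← hE]
      have h3 : z + E - (latticePt τ ω + E) = z - latticePt τ ω := by ring
      rw [h3]
      ring

lemma pterm_shift {e : ℤ × ℤ} (he : e ≠ 0) (z : ℂ) (ω : ℤ × ℤ) :
    pterm τ (z + latticePt τ e) (ω + e) = pterm τ z ω + -(ppterm τ e ω) := by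
  set E := latticePt τ e with hE
  by_cases h0 : ω = 0
  · subst h0
    rw [zero_add, pterm, if_neg he, pterm, if_pos rfl, ppterm, if_pos rfl, ← hE]
    have h1 : z + E - E = z := by ring
    rw [h1]
    ring
  · by_cases h1 : ω = -e
    · subst h1
      rw [neg_add_cancel, pterm, if_pos rfl, pterm, if_neg (neg_ne_zero.2 he),
        ppterm, if_neg (neg_ne_zero.2 he), if_pos rfl, latticePt_neg, ← hE]
      rw [sub_neg_eq_add, neg_sq]
      ring
    · have h2 : ω + e ≠ 0 := fun hc => h1 (eq_neg_of_add_eq_zero_left hc)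
      rw [pterm, if_neg h2, pterm, if_neg h0, ppterm, if_neg h0, if_neg h1,
        latticePt_add, ← hE]
      have h3 : z + E - (latticePt τ ω + E) = z - latticePt τ ω := by ring
      rw [h3]
      ring

/-- The involution `ω ↦ -ω - e`. -/
def iota (e : ℤ × ℤ) : ℤ × ℤ ≃ ℤ × ℤ :=
  Function.Involutive.toPerm (fun ω => -ω - e) (fun ω => by ring)

lemma ppterm_invol {e : ℤ × ℤ} (he : e ≠ 0) (ω : ℤ × ℤ) :
    ppterm τ e (-ω - e) = -ppterm τ e ω := by
  by_cases h0 : ω = 0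
  · subst h0
    have h1 : -(0 : ℤ × ℤ) - e = -e := by ring
    rw [h1, ppterm, if_neg (neg_ne_zero.2 he), if_pos rfl, ppterm, if_pos rfl]
  · by_cases h1 : ω = -e
    · subst h1
      have h2 : -(-e) - e = (0 : ℤ × ℤ) := by ring
      rw [h2, ppterm, if_pos rfl, ppterm, if_neg (neg_ne_zero.2 he), if_pos rfl, neg_neg]
    · have h2 : -ω - e ≠ 0 := fun hc => h1 (by
        have h3 : -ω = e := sub_eq_zero.mp hc
        rw [← h3]; ring)
      have h3 : -ω - e ≠ -e := fun hc => h0 (by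
        have h4 : -ω = 0 := by
          have h5 := sub_eq_iff_eq_add.mp hc
          rw [h5]; ring
        simpa using neg_eq_zero.mp h4)
      rw [ppterm, if_neg h2, if_neg h3, ppterm, if_neg h0, if_neg h1]
      have h4 : -ω - e + e = -ω := by ring
      have h5 : (-ω - e : ℤ × ℤ) = -(ω + e) := by ring
      rw [h4, h5, latticePt_neg, latticePt_neg, neg_sq, neg_sq]
      ring

lemma tsum_ppterm (hτ : 0 < τ.im) {e : ℤ × ℤ} (he : e ≠ 0) :
    ∑' ω, ppterm τ e ω = 0 := by
  set S := ∑' ω, ppterm τ e ω with hS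
  have h1 : ∑' ω, ppterm τ e ((iota e) ω) = S := (iota e).tsum_eq (ppterm τ e)
  have h2 : ∑' ω, ppterm τ e ((iota e) ω) = ∑' ω, -(ppterm τ e ω) :=
    tsum_congr fun ω => ppterm_invol he ω
  rw [tsum_neg] at h2
  have h3 : S = -S := h1.symm.trans h2
  have h4 : (2 : ℂ) * S = 0 := by linear_combination h3
  rcases mul_eq_zero.mp h4 with h | h
  · exact absurd h two_ne_zero
  · exact h

lemma wzeta_shift (hτ : 0 < τ.im) {e : ℤ × ℤ} (he : e ≠ 0) (z : ℂ) :
    wzeta τ (z + latticePt τ e) = wzeta τ z + ∑' ω, ccterm τ e ω := by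
  rw [wzeta_eq hτ, wzeta_eq hτ]
  rw [← (Equiv.addRight e).tsum_eq (zterm τ (z + latticePt τ e))]
  have hpt : ∀ ω : ℤ × ℤ, zterm τ (z + latticePt τ e) ((Equiv.addRight e) ω)
      = zterm τ z ω + (ccterm τ e ω + z * ppterm τ e ω) := fun ω => zterm_shift he z ω
  rw [tsum_congr hpt]
  rw [Summable.tsum_add (summable_zterm hτ z) ((summable_ccterm hτ e).add
    ((summable_ppterm hτ e).mul_left z))]
  rw [Summable.tsum_add (summable_ccterm hτ e) ((summable_ppterm hτ e).mul_left z)]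
  rw [tsum_mul_left, tsum_ppterm hτ he, mul_zero, add_zero]

lemma wp_shift (hτ : 0 < τ.im) {e : ℤ × ℤ} (he : e ≠ 0) (z : ℂ) :
    wp τ (z + latticePt τ e) = wp τ z := by
  rw [wp_eq hτ, wp_eq hτ]
  rw [← (Equiv.addRight e).tsum_eq (pterm τ (z + latticePt τ e))]
  have hpt : ∀ ω : ℤ × ℤ, pterm τ (z + latticePt τ e) ((Equiv.addRight e) ω)
      = pterm τ z ω + -(ppterm τ e ω) := fun ω => pterm_shift he z ω
  rw [tsum_congr hpt]
  rw [Summable.tsum_add (summable_pterm hτ z) (summable_ppterm hτ e).neg]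
  rw [tsum_neg, tsum_ppterm hτ he, neg_zero, add_zero]

lemma tsum_ccterm_eq (hτ : 0 < τ.im) {e : ℤ × ℤ} (he : e ≠ 0) :
    ∑' ω, ccterm τ e ω = 2 * wzeta τ (latticePt τ e / 2) := by
  have h := wzeta_shift hτ he (-(latticePt τ e / 2))
  have heq : -(latticePt τ e / 2) + latticePt τ e = latticePt τ e / 2 := by ring
  rw [heq, wzeta_neg hτ] at h
  linear_combination -h

lemma latticePt_e1 (τ : ℂ) : latticePt τ ((1, 0) : ℤ × ℤ) = 1 := by simp [latticePt]

lemma latticePt_e2 (τ : ℂ) : latticePt τ ((0, 1) : ℤ × ℤ) = τ := by simp [latticePt]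

lemma wzeta_shift_one (hτ : 0 < τ.im) (z : ℂ) :
    wzeta τ (z + 1) = wzeta τ z + eta1 τ := by
  have he : ((1, 0) : ℤ × ℤ) ≠ 0 := by decide
  have h := wzeta_shift hτ he z
  rw [latticePt_e1] at h
  rw [h, tsum_ccterm_eq hτ he, latticePt_e1, eta1]

lemma wzeta_shift_tau (hτ : 0 < τ.im) (z : ℂ) :
    wzeta τ (z + τ) = wzeta τ z + eta2 τ := by
  have he : ((0, 1) : ℤ × ℤ) ≠ 0 := by decide
  have h := wzeta_shift hτ he z
  rw [latticePt_e2] at h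
  rw [h, tsum_ccterm_eq hτ he, latticePt_e2, eta2]

lemma wp_shift_one (hτ : 0 < τ.im) (z : ℂ) : wp τ (z + 1) = wp τ z := by
  have he : ((1, 0) : ℤ × ℤ) ≠ 0 := by decide
  have h := wp_shift hτ he z
  rwa [latticePt_e1] at h

lemma wp_shift_tau (hτ : 0 < τ.im) (z : ℂ) : wp τ (z + τ) = wp τ z := by
  have he : ((0, 1) : ℤ × ℤ) ≠ 0 := by decide
  have h := wp_shift hτ he z
  rwa [latticePt_e2] at h

lemma wzeta_add_int_m (hτ : 0 < τ.im) (m : ℤ) (z : ℂ) :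
    wzeta τ (z + (m : ℂ)) = wzeta τ z + (m : ℂ) * eta1 τ := by
  induction m using Int.induction_on generalizing z with
  | zero => simp
  | succ k ih =>
    have h1 : z + ((k : ℤ) + 1 : ℤ) = (z + (k : ℤ)) + 1 := by push_cast; ring
    rw [h1, wzeta_shift_one hτ, ih]
    push_cast
    ring
  | pred k ih =>
    have h1 : (z + (-(k : ℤ) - 1 : ℤ)) + 1 = z + (-(k : ℤ) : ℤ) := by push_cast; ring
    have h2 := wzeta_shift_one hτ (z + (-(k : ℤ) - 1 : ℤ))
    rw [h1, ih] at h2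
    push_cast at h2 ⊢
    linear_combination -h2

lemma wzeta_add_int_n (hτ : 0 < τ.im) (n : ℤ) (z : ℂ) :
    wzeta τ (z + (n : ℂ) * τ) = wzeta τ z + (n : ℂ) * eta2 τ := by
  induction n using Int.induction_on generalizing z with
  | zero => simp
  | succ k ih =>
    have h1 : z + (((k : ℤ) + 1 : ℤ) : ℂ) * τ = (z + (k : ℤ) * τ) + τ := by push_cast; ring
    rw [h1, wzeta_shift_tau hτ, ih]
    push_cast
    ring
  | pred k ih =>
    have h1 : (z + ((-(k : ℤ) - 1 : ℤ) : ℂ) * τ) + τ = z + ((-(k : ℤ) : ℤ) : ℂ) * τ := by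
      push_cast; ring
    have h2 := wzeta_shift_tau hτ (z + ((-(k : ℤ) - 1 : ℤ) : ℂ) * τ)
    rw [h1, ih] at h2
    push_cast at h2 ⊢
    linear_combination -h2

lemma wzeta_add_int (hτ : 0 < τ.im) (m n : ℤ) (z : ℂ) :
    wzeta τ (z + ((m : ℂ) + (n : ℂ) * τ)) = wzeta τ z + (m : ℂ) * eta1 τ + (n : ℂ) * eta2 τ := by
  have h1 : z + ((m : ℂ) + (n : ℂ) * τ) = (z + (n : ℂ) * τ) + (m : ℂ) := by ring
  rw [h1, wzeta_add_int_m hτ, wzeta_add_int_n hτ]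
  ring

lemma wp_add_int_m (hτ : 0 < τ.im) (m : ℤ) (z : ℂ) :
    wp τ (z + (m : ℂ)) = wp τ z := by
  induction m using Int.induction_on generalizing z with
  | zero => simp
  | succ k ih =>
    have h1 : z + ((k : ℤ) + 1 : ℤ) = (z + (k : ℤ)) + 1 := by push_cast; ring
    rw [h1, wp_shift_one hτ, ih]
  | pred k ih =>
    have h1 : (z + (-(k : ℤ) - 1 : ℤ)) + 1 = z + (-(k : ℤ) : ℤ) := by push_cast; ring
    have h2 := wp_shift_one hτ (z + (-(k : ℤ) - 1 : ℤ))
    rw [h1, ih] at h2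
    exact h2.symm

lemma wp_add_int_n (hτ : 0 < τ.im) (n : ℤ) (z : ℂ) :
    wp τ (z + (n : ℂ) * τ) = wp τ z := by
  induction n using Int.induction_on generalizing z with
  | zero => simp
  | succ k ih =>
    have h1 : z + (((k : ℤ) + 1 : ℤ) : ℂ) * τ = (z + (k : ℤ) * τ) + τ := by push_cast; ring
    rw [h1, wp_shift_tau hτ, ih]
  | pred k ih =>
    have h1 : (z + ((-(k : ℤ) - 1 : ℤ) : ℂ) * τ) + τ = z + ((-(k : ℤ) : ℤ) : ℂ) * τ := by
      push_cast; ring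
    have h2 := wp_shift_tau hτ (z + ((-(k : ℤ) - 1 : ℤ) : ℂ) * τ)
    rw [h1, ih] at h2
    exact h2.symm

lemma wp_add_int (hτ : 0 < τ.im) (m n : ℤ) (z : ℂ) :
    wp τ (z + ((m : ℂ) + (n : ℂ) * τ)) = wp τ z := by
  have h1 : z + ((m : ℂ) + (n : ℂ) * τ) = (z + (n : ℂ) * τ) + (m : ℂ) := by ring
  rw [h1, wp_add_int_m hτ, wp_add_int_n hτ]

end
section
variable {τ : ℂ} {a b c d : ℤ}

/-- The unimodular change of basis of `ℤ × ℤ`. -/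
def gmap (a b c d : ℤ) (hdet : a * d - b * c = 1) : (ℤ × ℤ) ≃ (ℤ × ℤ) where
  toFun ω := (d * ω.1 + b * ω.2, c * ω.1 + a * ω.2)
  invFun ω := (a * ω.1 - b * ω.2, -(c * ω.1) + d * ω.2)
  left_inv ω := by
    obtain ⟨m, n⟩ := ω
    exact Prod.ext (by dsimp; linear_combination m * hdet) (by dsimp; linear_combination n * hdet)
  right_inv ω := by
    obtain ⟨m, n⟩ := ω
    exact Prod.ext (by dsimp; linear_combination m * hdet) (by dsimp; linear_combination n * hdet)

lemma gmap_zero_iff (hdet : a * d - b * c = 1) (ω : ℤ × ℤ) :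
    gmap a b c d hdet ω = 0 ↔ ω = 0 := by
  have h0 : gmap a b c d hdet 0 = 0 := by
    simp [gmap, Prod.ext_iff]
  constructor
  · intro h
    exact (gmap a b c d hdet).injective (h.trans h0.symm)
  · intro h
    rw [h, h0]

lemma lambda_ne_zero (hτ : 0 < τ.im) (hdet : a * d - b * c = 1) :
    (c : ℂ) * τ + d ≠ 0 := by
  intro h
  rcases eq_or_ne c 0 with hc | hc
  · have hd : (d : ℂ) = 0 := by rw [hc] at h; simpa using h
    have hd' : d = 0 := by exact_mod_cast hd
    rw [hc, hd'] at hdet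
    simp at hdet
  · have him : ((c : ℂ) * τ + d).im = (c : ℝ) * τ.im := by
      simp [Complex.add_im, Complex.mul_im]
    rw [h] at him
    have : (c : ℝ) * τ.im = 0 := by rw [← him]; simp
    rcases mul_eq_zero.mp this with h' | h'
    · exact hc (by exact_mod_cast h')
    · exact absurd h' (ne_of_gt hτ)

lemma latticePt_gmap (hdet : a * d - b * c = 1) (hlm : (c : ℂ) * τ + d ≠ 0) (ω : ℤ × ℤ) :
    latticePt (((a : ℂ) * τ + b) / ((c : ℂ) * τ + d)) ω
      = latticePt τ (gmap a b c d hdet ω) / ((c : ℂ) * τ + d) := by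
  obtain ⟨m, n⟩ := ω
  simp only [latticePt, gmap, Equiv.coe_fn_mk]
  push_cast
  rw [eq_div_iff hlm, add_mul, mul_assoc, div_mul_cancel₀ _ hlm]
  ring

lemma zfrac_hom {lam : ℂ} (hlm : lam ≠ 0) (u z : ℂ) :
    1 / (z - u / lam) + 1 / (u / lam) + z / (u / lam) ^ 2
      = lam * (1 / (lam * z - u) + 1 / u + lam * z / u ^ 2) := by
  have h1 : z - u / lam = (lam * z - u) / lam := by field_simp
  rw [h1, one_div_div, one_div_div, div_pow, div_div_eq_mul_div]
  ring

lemma pfrac_hom {lam : ℂ} (hlm : lam ≠ 0) (u z : ℂ) :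
    1 / (z - u / lam) ^ 2 - 1 / (u / lam) ^ 2
      = lam ^ 2 * (1 / (lam * z - u) ^ 2 - 1 / u ^ 2) := by
  have h1 : z - u / lam = (lam * z - u) / lam := by field_simp
  rw [h1, div_pow, div_pow, one_div_div, one_div_div]
  ring

lemma head_z (lam z : ℂ) (hlm : lam ≠ 0) : 1 / z = lam * (1 / (lam * z)) := by
  rcases eq_or_ne z 0 with rfl | hz
  · simp
  · field_simp

lemma head_p (lam z : ℂ) (hlm : lam ≠ 0) : 1 / z ^ 2 = lam ^ 2 * (1 / (lam * z) ^ 2) := by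
  rcases eq_or_ne z 0 with rfl | hz
  · simp
  · field_simp

lemma wzeta_hom (hdet : a * d - b * c = 1) (hlm : (c : ℂ) * τ + d ≠ 0) (z : ℂ) :
    wzeta (((a : ℂ) * τ + b) / ((c : ℂ) * τ + d)) z
      = ((c : ℂ) * τ + d) * wzeta τ (((c : ℂ) * τ + d) * z) := by
  set lam := (c : ℂ) * τ + d with hlam
  set τ' := ((a : ℂ) * τ + b) / lam with hτ'
  rw [wzeta, wzeta, mul_add, ← tsum_mul_left]
  congr 1
  · exact head_z lam z hlm
  · rw [← (gmap a b c d hdet).tsum_eq (fun ω => lam *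
      (if ω = 0 then 0 else 1 / (lam * z - latticePt τ ω) + 1 / latticePt τ ω
        + lam * z / latticePt τ ω ^ 2))]
    apply tsum_congr
    intro ω
    rcases eq_or_ne ω 0 with rfl | h
    · simp [gmap_zero_iff hdet, latticePt_zero]
    · rw [if_neg h, if_neg (fun hc => h ((gmap_zero_iff hdet ω).mp hc)),
        latticePt_gmap hdet hlm]
      exact zfrac_hom hlm _ z

lemma wp_hom (hdet : a * d - b * c = 1) (hlm : (c : ℂ) * τ + d ≠ 0) (z : ℂ) :
    wp (((a : ℂ) * τ + b) / ((c : ℂ) * τ + d)) z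
      = ((c : ℂ) * τ + d) ^ 2 * wp τ (((c : ℂ) * τ + d) * z) := by
  set lam := (c : ℂ) * τ + d with hlam
  rw [wp, wp, mul_add, ← tsum_mul_left]
  congr 1
  · exact head_p lam z hlm
  · rw [← (gmap a b c d hdet).tsum_eq (fun ω => lam ^ 2 *
      (if ω = 0 then 0 else 1 / (lam * z - latticePt τ ω) ^ 2 - 1 / latticePt τ ω ^ 2))]
    apply tsum_congr
    intro ω
    rcases eq_or_ne ω 0 with rfl | h
    · simp [gmap_zero_iff hdet]
    · rw [if_neg h, if_neg (fun hc => h ((gmap_zero_iff hdet ω).mp hc)),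
        latticePt_gmap hdet hlm]
      exact pfrac_hom hlm _ z

lemma deriv_comp_const_mul' (f : ℂ → ℂ) {cc : ℂ} (hc : cc ≠ 0) (x : ℂ) :
    deriv (fun y => f (cc * y)) x = cc * deriv f (cc * x) := by
  by_cases hf : DifferentiableAt ℂ f (cc * x)
  · have hg : HasDerivAt (fun y : ℂ => cc * y) cc x := by
      simpa using (hasDerivAt_id x).const_mul cc
    have h1 := (hf.hasDerivAt.comp x hg)
    have h2 := h1.deriv
    rw [Function.comp_def] at h2
    rw [h2]
    ring
  · have h2 : ¬ DifferentiableAt ℂ (fun y => f (cc * y)) x := by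
      intro hcontra
      apply hf
      have hxx : cc⁻¹ * (cc * x) = x := by field_simp
      rw [← hxx] at hcontra
      have h3 := hcontra.comp (cc * x)
        ((differentiableAt_id.const_mul cc⁻¹) : DifferentiableAt ℂ (fun y : ℂ => cc⁻¹ * y) (cc * x))
      have h4 : ((fun y => f (cc * y)) ∘ fun y : ℂ => cc⁻¹ * y) = f := by
        funext y
        simp only [Function.comp_apply]
        rw [← mul_assoc, mul_inv_cancel₀ hc, one_mul]
      rwa [h4] at h3
    rw [deriv_zero_of_not_differentiableAt hf, deriv_zero_of_not_differentiableAt h2, mul_zero]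

lemma wpDeriv_hom (hdet : a * d - b * c = 1) (hlm : (c : ℂ) * τ + d ≠ 0) (z : ℂ) :
    wpDeriv (((a : ℂ) * τ + b) / ((c : ℂ) * τ + d)) z
      = ((c : ℂ) * τ + d) ^ 3 * wpDeriv τ (((c : ℂ) * τ + d) * z) := by
  set lam := (c : ℂ) * τ + d with hlam
  have hfun : wp (((a : ℂ) * τ + b) / lam) = fun y => lam ^ 2 * wp τ (lam * y) :=
    funext fun y => wp_hom hdet hlm y
  rw [wpDeriv, hfun, deriv_const_mul_field, deriv_comp_const_mul' (wp τ) hlm, wpDeriv]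
  ring

lemma wpDeriv_add_int (hτ : 0 < τ.im) (m n : ℤ) (z : ℂ) :
    wpDeriv τ (z + ((m : ℂ) + (n : ℂ) * τ)) = wpDeriv τ z := by
  have hfun : (fun y => wp τ (y + ((m : ℂ) + (n : ℂ) * τ))) = wp τ :=
    funext fun y => wp_add_int hτ m n y
  calc wpDeriv τ (z + ((m : ℂ) + (n : ℂ) * τ))
      = deriv (fun y => wp τ (y + ((m : ℂ) + (n : ℂ) * τ))) z :=
        (deriv_comp_add_const (wp τ) _ z).symm
    _ = wpDeriv τ z := by rw [hfun, wpDeriv]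

lemma eta1_hom (hτ : 0 < τ.im) (hdet : a * d - b * c = 1) (hlm : (c : ℂ) * τ + d ≠ 0) :
    eta1 (((a : ℂ) * τ + b) / ((c : ℂ) * τ + d))
      = ((c : ℂ) * τ + d) * ((d : ℂ) * eta1 τ + (c : ℂ) * eta2 τ) := by
  set lam := (c : ℂ) * τ + d with hlam
  rw [eta1, wzeta_hom hdet hlm]
  have key := wzeta_add_int hτ d c (-(lam / 2))
  have harg : -(lam / 2) + ((d : ℂ) + (c : ℂ) * τ) = lam / 2 := by rw [hlam]; ring
  rw [harg, wzeta_neg hτ] at key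
  have h2 : lam * (1 / 2 : ℂ) = lam / 2 := by ring
  rw [h2]
  linear_combination lam * key

lemma eta2_hom (hτ : 0 < τ.im) (hdet : a * d - b * c = 1) (hlm : (c : ℂ) * τ + d ≠ 0) :
    eta2 (((a : ℂ) * τ + b) / ((c : ℂ) * τ + d))
      = ((c : ℂ) * τ + d) * ((b : ℂ) * eta1 τ + (a : ℂ) * eta2 τ) := by
  set lam := (c : ℂ) * τ + d with hlam
  rw [eta2, wzeta_hom hdet hlm]
  have key := wzeta_add_int hτ b a (-(((a : ℂ) * τ + b) / 2))
  have harg : -(((a : ℂ) * τ + b) / 2) + ((b : ℂ) + (a : ℂ) * τ) = ((a : ℂ) * τ + b) / 2 := by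
    ring
  rw [harg, wzeta_neg hτ] at key
  have h2 : lam * (((a : ℂ) * τ + b) / lam / 2) = ((a : ℂ) * τ + b) / 2 := by
    field_simp
  rw [h2]
  linear_combination lam * key

lemma Z2_hom (hτ : 0 < τ.im) (hdet : a * d - b * c = 1) (hlm : (c : ℂ) * τ + d ≠ 0)
    (r s r'' s'' : ℂ) (m n : ℤ)
    (hr : r * d + s * b = r'' + m) (hs : r * c + s * a = s'' + n) :
    Z2 r s (((a : ℂ) * τ + b) / ((c : ℂ) * τ + d))
      = ((c : ℂ) * τ + d) ^ 3 * Z2 r'' s'' τ := by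
  set lam := (c : ℂ) * τ + d with hlam
  set τ' := ((a : ℂ) * τ + b) / lam with hτ'
  have htl : lam * τ' = (a : ℂ) * τ + b := by
    rw [hτ']; field_simp
  have hlmz : lam * (r + s * τ') = (r'' + s'' * τ) + ((m : ℂ) + (n : ℂ) * τ) := by
    have h1 : lam * (r + s * τ') = r * lam + s * (lam * τ') := by ring
    rw [h1, htl, hlam]
    linear_combination hr + τ * hs
  have hZ : Zrs r s τ' = lam * Zrs r'' s'' τ := by
    rw [Zrs, Zrs, wzeta_hom hdet hlm, hlmz, wzeta_add_int hτ m n,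
      eta1_hom hτ hdet hlm, eta2_hom hτ hdet hlm]
    linear_combination (-(lam * eta1 τ)) * hr + (-(lam * eta2 τ)) * hs
  have hP : wp τ' (r + s * τ') = lam ^ 2 * wp τ (r'' + s'' * τ) := by
    rw [wp_hom hdet hlm, hlmz, wp_add_int hτ]
  have hD : wpDeriv τ' (r + s * τ') = lam ^ 3 * wpDeriv τ (r'' + s'' * τ) := by
    rw [wpDeriv_hom hdet hlm, hlmz, wpDeriv_add_int hτ]
  rw [Z2, Z2, hZ, hP, hD]
  ring

end
end MNaux
end

/-- The set `Q_N` of `N`-torsion pairs `(k₁/N, k₂/N)`, indexed by the numerators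
`(k₁, k₂)` with `0 ≤ k₁, k₂ ≤ N − 1` and `gcd(k₁, k₂, N) = 1`. -/
def QN (N : ℕ) : Finset (ℕ × ℕ) :=
  (Finset.range N ×ˢ Finset.range N).filter fun k => Nat.gcd k.1 (Nat.gcd k.2 N) = 1

/-- The modular form `M_N(τ) = ∏_{(r,s) ∈ Q_N} Z^{(2)}_{r,s}(τ)`. -/
noncomputable def MN (N : ℕ) (τ : ℂ) : ℂ :=
  ∏ k ∈ QN N, Z2 ((k.1 : ℂ) / N) ((k.2 : ℂ) / N) τ


namespace MNaux

/-- An integral linear map on torsion indices, reduced mod `N`. -/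
def Tmap (N : ℕ) (A B C D : ℤ) (k : ℕ × ℕ) : ℕ × ℕ :=
  (((D * k.1 + B * k.2 : ℤ) % N).toNat, ((C * k.1 + A * k.2 : ℤ) % N).toNat)

lemma mem_QN_iff {N : ℕ} {k : ℕ × ℕ} :
    k ∈ QN N ↔ k.1 < N ∧ k.2 < N ∧ Nat.gcd k.1 (Nat.gcd k.2 N) = 1 := by
  rw [QN, Finset.mem_filter, Finset.mem_product, Finset.mem_range, Finset.mem_range]
  tauto

lemma Tmap_fst_coe {N : ℕ} (hN : 0 < N) (A B C D : ℤ) (k : ℕ × ℕ) :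
    ((Tmap N A B C D k).1 : ℤ) = (D * k.1 + B * k.2 : ℤ) % N := by
  have hnn : 0 ≤ (D * k.1 + B * k.2 : ℤ) % N :=
    Int.emod_nonneg _ (by exact_mod_cast hN.ne')
  exact Int.toNat_of_nonneg hnn

lemma Tmap_snd_coe {N : ℕ} (hN : 0 < N) (A B C D : ℤ) (k : ℕ × ℕ) :
    ((Tmap N A B C D k).2 : ℤ) = (C * k.1 + A * k.2 : ℤ) % N := by
  have hnn : 0 ≤ (C * k.1 + A * k.2 : ℤ) % N :=
    Int.emod_nonneg _ (by exact_mod_cast hN.ne')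
  exact Int.toNat_of_nonneg hnn

lemma Tmap_mem {N : ℕ} (hN : 0 < N) {A B C D : ℤ} (hdet : A * D - B * C = 1)
    {k : ℕ × ℕ} (hk : k ∈ QN N) : Tmap N A B C D k ∈ QN N := by
  obtain ⟨hk1, hk2, hgcd⟩ := mem_QN_iff.mp hk
  set x := (D * k.1 + B * k.2 : ℤ) with hx
  set y := (C * k.1 + A * k.2 : ℤ) with hy
  have hNZ : ((N : ℤ)) ≠ 0 := by exact_mod_cast hN.ne'
  have hNpos : (0 : ℤ) < N := by exact_mod_cast hN
  have hb1 : (Tmap N A B C D k).1 < N := by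
    have h := Int.emod_lt_of_pos x hNpos
    have hc := Tmap_fst_coe hN A B C D k
    rw [← hx] at hc
    omega
  have hb2 : (Tmap N A B C D k).2 < N := by
    have h := Int.emod_lt_of_pos y hNpos
    have hc := Tmap_snd_coe hN A B C D k
    rw [← hy] at hc
    omega
  refine mem_QN_iff.mpr ⟨hb1, hb2, ?_⟩
  set j1 := (Tmap N A B C D k).1 with hj1
  set j2 := (Tmap N A B C D k).2 with hj2
  set g := Nat.gcd j1 (Nat.gcd j2 N) with hg
  have hgj1 : (g : ℤ) ∣ (j1 : ℤ) := Int.natCast_dvd_natCast.mpr (Nat.gcd_dvd_left _ _)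
  have hgj2 : (g : ℤ) ∣ (j2 : ℤ) :=
    Int.natCast_dvd_natCast.mpr ((Nat.gcd_dvd_right _ _).trans (Nat.gcd_dvd_left _ _))
  have hgN : (g : ℤ) ∣ (N : ℤ) :=
    Int.natCast_dvd_natCast.mpr ((Nat.gcd_dvd_right _ _).trans (Nat.gcd_dvd_right _ _))
  have hgx : (g : ℤ) ∣ x := by
    have h1 : (g : ℤ) ∣ x % N := by rw [← Tmap_fst_coe hN A B C D k]; exact hgj1
    have h2 : (g : ℤ) ∣ (N : ℤ) * (x / N) := Dvd.dvd.mul_right hgN _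
    have h3 := Int.mul_ediv_add_emod x N
    calc (g : ℤ) ∣ (N : ℤ) * (x / N) + x % N := dvd_add h2 h1
      _ = x := h3
  have hgy : (g : ℤ) ∣ y := by
    have h1 : (g : ℤ) ∣ y % N := by rw [← Tmap_snd_coe hN A B C D k]; exact hgj2
    have h2 : (g : ℤ) ∣ (N : ℤ) * (y / N) := Dvd.dvd.mul_right hgN _
    have h3 := Int.mul_ediv_add_emod y N
    calc (g : ℤ) ∣ (N : ℤ) * (y / N) + y % N := dvd_add h2 h1
      _ = y := h3
  have hk1' : (g : ℤ) ∣ (k.1 : ℤ) := by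
    have h1 : A * x - B * y = (k.1 : ℤ) := by
      rw [hx, hy]; linear_combination (k.1 : ℤ) * hdet
    rw [← h1]
    exact dvd_sub (hgx.mul_left A) (hgy.mul_left B)
  have hk2' : (g : ℤ) ∣ (k.2 : ℤ) := by
    have h1 : D * y - C * x = (k.2 : ℤ) := by
      rw [hx, hy]; linear_combination (k.2 : ℤ) * hdet
    rw [← h1]
    exact dvd_sub (hgy.mul_left D) (hgx.mul_left C)
  have hdvd : g ∣ Nat.gcd k.1 (Nat.gcd k.2 N) :=
    Nat.dvd_gcd (Int.natCast_dvd_natCast.mp hk1')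
      (Nat.dvd_gcd (Int.natCast_dvd_natCast.mp hk2') (Int.natCast_dvd_natCast.mp hgN))
  rw [hgcd] at hdvd
  exact Nat.dvd_one.mp hdvd

lemma Tmap_inverse {N : ℕ} (hN : 0 < N) {A B C D A' B' C' D' : ℤ}
    (h1 : D' * D + B' * C = 1) (h2 : D' * B + B' * A = 0)
    (h3 : C' * D + A' * C = 0) (h4 : C' * B + A' * A = 1)
    {k : ℕ × ℕ} (hk : k ∈ QN N) :
    Tmap N A' B' C' D' (Tmap N A B C D k) = k := by
  obtain ⟨hk1, hk2, _⟩ := mem_QN_iff.mp hk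
  set x := (D * k.1 + B * k.2 : ℤ) with hx
  set y := (C * k.1 + A * k.2 : ℤ) with hy
  have hNpos : (0 : ℤ) < N := by exact_mod_cast hN
  have m1 : (x % N) ≡ x [ZMOD N] := Int.emod_emod_of_dvd x dvd_rfl
  have m2 : (y % N) ≡ y [ZMOD N] := Int.emod_emod_of_dvd y dvd_rfl
  have hfst : (D' * ((Tmap N A B C D k).1 : ℤ) + B' * ((Tmap N A B C D k).2 : ℤ)) % N
      = (k.1 : ℤ) := by
    rw [Tmap_fst_coe hN A B C D k, Tmap_snd_coe hN A B C D k]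
    have hcong : D' * (x % N) + B' * (y % N) ≡ D' * x + B' * y [ZMOD N] :=
      (m1.mul_left D').add (m2.mul_left B')
    have hval : D' * x + B' * y = (k.1 : ℤ) := by
      rw [hx, hy]; linear_combination (k.1 : ℤ) * h1 + (k.2 : ℤ) * h2
    have := hcong
    rw [Int.ModEq] at this
    rw [this, hval, Int.emod_eq_of_lt (by positivity) (by exact_mod_cast hk1)]
  have hsnd : (C' * ((Tmap N A B C D k).1 : ℤ) + A' * ((Tmap N A B C D k).2 : ℤ)) % N
      = (k.2 : ℤ) := by
    rw [Tmap_fst_coe hN A B C D k, Tmap_snd_coe hN A B C D k]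
    have hcong : C' * (x % N) + A' * (y % N) ≡ C' * x + A' * y [ZMOD N] :=
      (m1.mul_left C').add (m2.mul_left A')
    have hval : C' * x + A' * y = (k.2 : ℤ) := by
      rw [hx, hy]; linear_combination (k.1 : ℤ) * h3 + (k.2 : ℤ) * h4
    have := hcong
    rw [Int.ModEq] at this
    rw [this, hval, Int.emod_eq_of_lt (by positivity) (by exact_mod_cast hk2)]
  apply Prod.ext
  · show ((D' * ((Tmap N A B C D k).1 : ℕ) + B' * ((Tmap N A B C D k).2 : ℕ) : ℤ) % N).toNat
      = k.1
    rw [hfst]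
    exact Int.toNat_natCast k.1
  · show ((C' * ((Tmap N A B C D k).1 : ℕ) + A' * ((Tmap N A B C D k).2 : ℕ) : ℤ) % N).toNat
      = k.2
    rw [hsnd]
    exact Int.toNat_natCast k.2

end MNaux

/-- `M_N` is a modular form of weight `3·#Q_N` for `SL(2,ℤ)`: for any
`γ = [[a,b],[c,d]] ∈ SL(2,ℤ)` and `τ ∈ ℍ`, `M_N(γ·τ) = (cτ+d)^{3·#Q_N} M_N(τ)`. -/
theorem MN_modular (N : ℕ) (hN : 3 ≤ N) (a b c d : ℤ) (hdet : a * d - b * c = 1)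
    (τ : ℂ) (hτ : 0 < τ.im) :
    MN N (((a : ℂ) * τ + b) / ((c : ℂ) * τ + d))
      = ((c : ℂ) * τ + d) ^ (3 * (QN N).card) * MN N τ := by
  have hlm : (c : ℂ) * τ + d ≠ 0 := MNaux.lambda_ne_zero hτ hdet
  have hN0 : 0 < N := by omega
  have hNZ : ((N : ℤ)) ≠ 0 := by exact_mod_cast hN0.ne'
  have hNC : (N : ℂ) ≠ 0 := Nat.cast_ne_zero.mpr hN0.ne'
  have hstep : ∀ k ∈ QN N,
      Z2 ((k.1 : ℂ) / N) ((k.2 : ℂ) / N) (((a : ℂ) * τ + b) / ((c : ℂ) * τ + d))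
        = ((c : ℂ) * τ + d) ^ 3
          * Z2 (((MNaux.Tmap N a b c d k).1 : ℂ) / N)
              (((MNaux.Tmap N a b c d k).2 : ℂ) / N) τ := by
    intro k hk
    set x := (d * k.1 + b * k.2 : ℤ) with hx
    set y := (c * k.1 + a * k.2 : ℤ) with hy
    apply MNaux.Z2_hom hτ hdet hlm _ _ _ _ (x / N) (y / N)
    · -- r-relation
      have hj : ((MNaux.Tmap N a b c d k).1 : ℤ) = x % N := by
        have h := MNaux.Tmap_fst_coe hN0 a b c d k
        rw [← hx] at h
        exact h
      have key : ((x % N : ℤ) : ℂ) + ((x / N : ℤ) : ℂ) * N = (x : ℂ) := by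
        exact_mod_cast congrArg (Int.cast : ℤ → ℂ) (Int.emod_add_ediv_mul x N)
      have hjC : ((MNaux.Tmap N a b c d k).1 : ℂ) = ((x % N : ℤ) : ℂ) := by
        exact_mod_cast congrArg (Int.cast : ℤ → ℂ) hj
      rw [hjC]
      have hxC : (x : ℂ) = d * k.1 + b * k.2 := by rw [hx]; push_cast; ring
      field_simp
      linear_combination -key - hxC
    · -- s-relation
      have hj : ((MNaux.Tmap N a b c d k).2 : ℤ) = y % N := by
        have h := MNaux.Tmap_snd_coe hN0 a b c d k
        rw [← hy] at h
        exact h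
      have key : ((y % N : ℤ) : ℂ) + ((y / N : ℤ) : ℂ) * N = (y : ℂ) := by
        exact_mod_cast congrArg (Int.cast : ℤ → ℂ) (Int.emod_add_ediv_mul y N)
      have hjC : ((MNaux.Tmap N a b c d k).2 : ℂ) = ((y % N : ℤ) : ℂ) := by
        exact_mod_cast congrArg (Int.cast : ℤ → ℂ) hj
      rw [hjC]
      have hyC : (y : ℂ) = c * k.1 + a * k.2 := by rw [hy]; push_cast; ring
      field_simp
      linear_combination -key - hyC
  rw [MN, MN, Finset.prod_congr rfl hstep, Finset.prod_mul_distrib, Finset.prod_const,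
    ← pow_mul]
  congr 1
  apply Finset.prod_nbij' (fun k => MNaux.Tmap N a b c d k)
    (fun k => MNaux.Tmap N d (-b) (-c) a k)
  · intro k hk
    exact MNaux.Tmap_mem hN0 (by linear_combination hdet) hk
  · intro k hk
    exact MNaux.Tmap_mem hN0 (by linear_combination hdet) hk
  · intro k hk
    exact MNaux.Tmap_inverse hN0 (by linear_combination hdet) (by ring)
      (by ring) (by linear_combination hdet) hk
  · intro k hk
    exact MNaux.Tmap_inverse hN0 (by linear_combination hdet) (by ring)
      (by ring) (by linear_combination hdet) hk
  · intro k hk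
    rfl
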